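/- Let d ≥ 2, let H be a d×d Hermitian complex matrix, β > 0, and ρ_β the Gibbs state of H. Let B̃ be a Hermitian matrix with B̃ρ_β = ρ_βB̃, and let L_KMS be a linear map on d×d complex matrices whose Hilbert–Schmidt adjoint L_KMS† is self-adjoint with respect to the KMS inner product. Set L̃(X) := −i(B̃X − XB̃) + L_KMS(X), let K(X) := ρ_β^{−1/4}·L̃(ρ_β^{1/4} X ρ_β^{1/4})·ρ_β^{−1/4}, and let ℋ := (1/2)(K + K†) where K† is the Hilbert–Schmidt adjoint of K. Then the two infima coincide: inf{ −Re⟨A, L_KMS†(A)⟩_{ρ_β} / ⟨A,A⟩_{ρ_β} : A ≠ 0, Tr(Aρ_β) = 0 } = inf{ −Re⟨X, ℋ(X)⟩₂ / ⟨X,X⟩₂ : X ≠ 0, ⟨X, ρ_β^{1/2}⟩₂ = 0 }. -/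

import Mathlib

open Matrix MeasureTheory Filter
open scoped ComplexOrder

noncomputable section

/-- The space of `d × d` complex matrices. -/
abbrev Mat (d : ℕ) : Type := Matrix (Fin d) (Fin d) ℂ

/-- The Gibbs state `ρ_β = exp(-βH)/Tr(exp(-βH))`. -/
def gibbs {d : ℕ} (H : Mat d) (β : ℝ) : Mat d :=
  (Matrix.trace (NormedSpace.exp ((-β : ℂ) • H)))⁻¹ • NormedSpace.exp ((-β : ℂ) • H)

/-- The power `ρ_β^s = exp(-sβH)/Tr(exp(-βH))^s`. -/
def gibbsPow {d : ℕ} (H : Mat d) (β s : ℝ) : Mat d :=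
  ((Matrix.trace (NormedSpace.exp ((-β : ℂ) • H))) ^ (s : ℂ))⁻¹ •
    NormedSpace.exp ((-(s * β) : ℂ) • H)

/-- The Hilbert–Schmidt inner product `⟨A,B⟩₂ = Tr(A† B)`. -/
def hsInner {d : ℕ} (A B : Mat d) : ℂ := Matrix.trace (Aᴴ * B)

/-- The KMS inner product `⟨A,B⟩_{ρ_β} = Tr(A† ρ_β^{1/2} B ρ_β^{1/2})`. -/
def kmsInner {d : ℕ} (H : Mat d) (β : ℝ) (A B : Mat d) : ℂ :=
  Matrix.trace (Aᴴ * gibbsPow H β (1/2) * B * gibbsPow H β (1/2))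

/-- The trace norm `‖A‖₁ = Tr √(A†A)`. -/
def traceNorm {d : ℕ} (A : Mat d) : ℝ :=
  (((Matrix.posSemidef_conjTranspose_mul_self A).1.eigenvectorUnitary.1 *
    Matrix.diagonal (((↑) : ℝ → ℂ) ∘ (Real.sqrt ·) ∘ (Matrix.posSemidef_conjTranspose_mul_self A).1.eigenvalues) *
    (star (Matrix.posSemidef_conjTranspose_mul_self A).1.eigenvectorUnitary : Mat d)).trace).re

/-- The operator (spectral) norm of a matrix. -/
def opNorm {d : ℕ} (A : Mat d) : ℝ :=
  ‖Matrix.toEuclideanCLM (𝕜 := ℂ) A‖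

/-- The Frobenius / Hilbert–Schmidt norm `‖A‖₂ = √Tr(A†A)`. -/
def frobNorm {d : ℕ} (A : Mat d) : ℝ :=
  Real.sqrt ((Matrix.trace (Aᴴ * A)).re)

attribute [local instance] Matrix.frobeniusNormedAddCommGroup Matrix.frobeniusNormedSpace

namespace Aux18

variable {d : ℕ} {H : Mat d} (hH : H.IsHermitian) (β : ℝ)

def V : Mat d := hH.eigenvectorUnitary

lemma V_mul_star : V hH * star (V hH) = 1 :=
  Matrix.mem_unitaryGroup_iff.mp hH.eigenvectorUnitary.2

lemma star_mul_V : star (V hH) * V hH = 1 :=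
  Matrix.mem_unitaryGroup_iff'.mp hH.eigenvectorUnitary.2

lemma exp_smul_eq (c : ℂ) :
    NormedSpace.exp (c • H) =
      V hH * Matrix.diagonal (fun i => Complex.exp (c * (hH.eigenvalues i : ℂ))) * star (V hH) := by
  have hU : IsUnit (V hH) := ⟨⟨V hH, star (V hH), V_mul_star hH, star_mul_V hH⟩, rfl⟩
  have hinv : (V hH)⁻¹ = star (V hH) := Matrix.inv_eq_left_inv (star_mul_V hH)
  have hspec : H = V hH * Matrix.diagonal (RCLike.ofReal ∘ hH.eigenvalues) * star (V hH) :=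
    hH.spectral_theorem
  conv_lhs => rw [hspec]
  have hd : c • Matrix.diagonal (RCLike.ofReal ∘ hH.eigenvalues : Fin d → ℂ)
      = Matrix.diagonal (fun i => c * (hH.eigenvalues i : ℂ)) := by
    ext i j
    simp [Matrix.diagonal_apply, mul_ite, Function.comp]
  have h1 : c • ((V hH : Mat d) * Matrix.diagonal (RCLike.ofReal ∘ hH.eigenvalues) * star (V hH))
      = V hH * Matrix.diagonal (fun i => c * (hH.eigenvalues i : ℂ)) * star (V hH) := by
    simp only [← hd, Matrix.mul_smul, Matrix.smul_mul]
  rw [h1, ← hinv, Matrix.exp_conj _ _ hU, Matrix.exp_diagonal, hinv]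
  congr 2
  rw [Pi.exp_def]
  funext i
  rw [← Complex.exp_eq_exp_ℂ]


/-- normalization constant -/
def r : ℝ := ∑ i, Real.exp (-β * hH.eigenvalues i)

lemma r_pos (hd : 0 < d) : 0 < r hH β := by
  have : Nonempty (Fin d) := Fin.pos_iff_nonempty.mp hd
  exact Finset.sum_pos (fun i _ => Real.exp_pos _) Finset.univ_nonempty

lemma r_nonneg : 0 ≤ r hH β :=
  Finset.sum_nonneg (fun i _ => (Real.exp_pos _).le)

lemma trace_exp_eq : Matrix.trace (NormedSpace.exp ((-β : ℂ) • H)) = (r hH β : ℂ) := by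
  rw [show ((-β : ℂ)) = ((-β : ℝ) : ℂ) by push_cast; ring]
  rw [exp_smul_eq hH]
  rw [Matrix.trace_mul_cycle, star_mul_V hH, one_mul, Matrix.trace_diagonal]
  rw [r]
  push_cast
  rfl

/-- the diagonal entries of `gibbsPow s` -/
def g (s : ℝ) (i : Fin d) : ℝ := Real.exp (-(s * β) * hH.eigenvalues i) / (r hH β) ^ s

def P (s : ℝ) : Mat d :=
  V hH * Matrix.diagonal (fun i => (g hH β s i : ℂ)) * star (V hH)

lemma gibbsPow_eq (s : ℝ) : gibbsPow H β s = P hH β s := by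
  rw [gibbsPow, trace_exp_eq hH]
  rw [show ((-(s * β) : ℂ)) = ((-(s * β) : ℝ) : ℂ) by push_cast; ring]
  rw [exp_smul_eq hH]
  rw [show ((r hH β : ℂ) ^ (s : ℂ)) = (((r hH β) ^ s : ℝ) : ℂ) from
    (Complex.ofReal_cpow (r_nonneg hH β) s).symm]
  rw [P]
  have hd : ((((r hH β) ^ s : ℝ) : ℂ))⁻¹ •
      (Matrix.diagonal fun i => Complex.exp (((-(s * β) : ℝ) : ℂ) * (hH.eigenvalues i : ℂ)))
      = Matrix.diagonal (fun i => (g hH β s i : ℂ)) := by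
    ext i j
    by_cases h : i = j
    · subst h
      simp only [Matrix.smul_apply, Matrix.diagonal_apply_eq, g, smul_eq_mul]
      rw [div_eq_inv_mul]
      push_cast
      ring
    · simp [Matrix.diagonal_apply_ne _ h, h]
  simp only [← hd, Matrix.mul_smul, Matrix.smul_mul]

lemma P_mul (hd : 0 < d) (s t : ℝ) : P hH β s * P hH β t = P hH β (s + t) := by
  have hr := r_pos hH β hd
  rw [P, P, P]
  have h1 : star (V hH) * (V hH * Matrix.diagonal (fun i => (g hH β t i : ℂ)) * star (V hH))
      = Matrix.diagonal (fun i => (g hH β t i : ℂ)) * star (V hH) := by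
    rw [← mul_assoc, ← mul_assoc, star_mul_V hH, one_mul]
  have hfun : (fun i => ((g hH β s i : ℝ) : ℂ) * ((g hH β t i : ℝ) : ℂ))
      = (fun i => ((g hH β (s + t) i : ℝ) : ℂ)) := by
    funext i
    simp only [g]
    rw [← Complex.ofReal_mul]
    congr 1
    rw [div_mul_div_comm, ← Real.exp_add, ← Real.rpow_add hr]
    congr 2
    ring
  rw [mul_assoc (V hH * Matrix.diagonal _), h1, ← mul_assoc, mul_assoc (V hH),
    Matrix.diagonal_mul_diagonal, hfun]

lemma P_zero : P hH β 0 = 1 := by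
  rw [P]
  have : (fun i => ((g hH β 0 i : ℝ) : ℂ)) = fun _ => (1 : ℂ) := by
    funext i
    simp [g, Real.rpow_zero]
  rw [this, Matrix.diagonal_one, mul_one, V_mul_star hH]

lemma P_herm (s : ℝ) : (P hH β s)ᴴ = P hH β s := by
  have hD : (Matrix.diagonal (fun i => ((g hH β s i : ℝ) : ℂ)))ᴴ
      = Matrix.diagonal (fun i => ((g hH β s i : ℝ) : ℂ)) := by
    ext i j
    by_cases h : i = j
    · subst h
      simp [Matrix.conjTranspose_apply, Matrix.diagonal_apply_eq, Complex.conj_ofReal]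
    · simp [Matrix.conjTranspose_apply, Matrix.diagonal_apply_ne, h, Ne.symm h]
  rw [P, Matrix.conjTranspose_mul, Matrix.conjTranspose_mul, hD]
  rw [show (star (V hH))ᴴ = V hH from star_star (V hH)]
  rw [show (V hH)ᴴ = star (V hH) from rfl]
  rw [← mul_assoc]

lemma gibbs_eq : gibbs H β = gibbsPow H β 1 := by
  rw [gibbs, gibbsPow, show ((1:ℝ):ℂ) = 1 from by norm_num, Complex.cpow_one]
  norm_num

lemma eig_eq_of_g_one (hd : 0 < d) (hβ : 0 < β) {i j : Fin d}
    (h : g hH β 1 i = g hH β 1 j) : hH.eigenvalues i = hH.eigenvalues j := by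
  have hr := r_pos hH β hd
  simp only [g] at h
  rw [div_eq_div_iff (by positivity) (by positivity)] at h
  have h2 : Real.exp (-(1 * β) * hH.eigenvalues i) = Real.exp (-(1 * β) * hH.eigenvalues j) :=
    mul_right_cancel₀ (by positivity) h
  have h3 := Real.exp_injective h2
  have hβ' : (-(1 * β)) ≠ 0 := by simp [hβ.ne']
  exact mul_left_cancel₀ hβ' h3

lemma commute_P (hd : 0 < d) (hβ : 0 < β) (Bt : Mat d)
    (hc : Bt * gibbs H β = gibbs H β * Bt) (s : ℝ) :
    Bt * P hH β s = P hH β s * Bt := by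
  have h1 : Bt * P hH β 1 = P hH β 1 * Bt := by
    rw [← gibbsPow_eq hH, ← gibbs_eq]; exact hc
  set M : Mat d := star (V hH) * Bt * V hH with hM
  have hBt : Bt = V hH * M * star (V hH) := by
    rw [hM]
    rw [← mul_assoc, ← mul_assoc, V_mul_star hH, one_mul, mul_assoc, V_mul_star hH, mul_one]
  have hMd : ∀ t : ℝ, M * Matrix.diagonal (fun i => (g hH β t i : ℂ))
      = Matrix.diagonal (fun i => (g hH β t i : ℂ)) * M → Bt * P hH β t = P hH β t * Bt := by
    intro t h
    rw [P, hBt]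
    have cancel : ∀ Z : Mat d, star (V hH) * (V hH * Z) = Z := fun Z => by
      rw [← mul_assoc, star_mul_V hH, one_mul]
    have cancel' : ∀ Z : Mat d, V hH * (star (V hH) * Z) = Z := fun Z => by
      rw [← mul_assoc, V_mul_star hH, one_mul]
    calc V hH * M * star (V hH) * (V hH * Matrix.diagonal (fun i => (g hH β t i : ℂ)) * star (V hH))
        = V hH * (M * Matrix.diagonal (fun i => (g hH β t i : ℂ))) * star (V hH) := by
          simp only [mul_assoc, cancel, cancel', star_mul_V hH, V_mul_star hH, mul_one, one_mul]
      _ = V hH * (Matrix.diagonal (fun i => (g hH β t i : ℂ)) * M) * star (V hH) := by rw [h]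
      _ = V hH * Matrix.diagonal (fun i => (g hH β t i : ℂ)) * star (V hH) *
            (V hH * M * star (V hH)) := by
          simp only [mul_assoc, cancel, cancel', star_mul_V hH, V_mul_star hH, mul_one, one_mul]
  have hMd1 : M * Matrix.diagonal (fun i => (g hH β 1 i : ℂ))
      = Matrix.diagonal (fun i => (g hH β 1 i : ℂ)) * M := by
    have h2 := h1
    rw [P, hBt] at h2
    have cancel : ∀ Z : Mat d, star (V hH) * (V hH * Z) = Z := fun Z => by
      rw [← mul_assoc, star_mul_V hH, one_mul]
    have cancel' : ∀ Z : Mat d, V hH * (star (V hH) * Z) = Z := fun Z => by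
      rw [← mul_assoc, V_mul_star hH, one_mul]
    calc M * Matrix.diagonal (fun i => (g hH β 1 i : ℂ))
        = star (V hH) * (V hH * M * star (V hH) *
            (V hH * Matrix.diagonal (fun i => (g hH β 1 i : ℂ)) * star (V hH))) * V hH := by
          simp only [mul_assoc, cancel, cancel', star_mul_V hH, V_mul_star hH, mul_one, one_mul]
      _ = star (V hH) * (V hH * Matrix.diagonal (fun i => (g hH β 1 i : ℂ)) * star (V hH) *
            (V hH * M * star (V hH))) * V hH := by rw [h2]
      _ = Matrix.diagonal (fun i => (g hH β 1 i : ℂ)) * M := by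
          simp only [mul_assoc, cancel, cancel', star_mul_V hH, V_mul_star hH, mul_one, one_mul]
  apply hMd
  ext i j
  rw [Matrix.mul_diagonal, Matrix.diagonal_mul]
  by_cases hz : M i j = 0
  · simp [hz]
  · have hent : M i j * (g hH β 1 j : ℂ) = (g hH β 1 i : ℂ) * M i j := by
      have h3 := congrFun (congrFun hMd1 i) j
      rwa [Matrix.mul_diagonal, Matrix.diagonal_mul] at h3
    rw [mul_comm (M i j)] at hent
    have hg1 : (g hH β 1 j : ℂ) = (g hH β 1 i : ℂ) := mul_right_cancel₀ hz hent
    have hev : hH.eigenvalues j = hH.eigenvalues i :=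
      eig_eq_of_g_one hH β hd hβ (by exact_mod_cast hg1)
    have hgs : g hH β s j = g hH β s i := by simp only [g]; rw [hev]
    rw [hgs]
    ring

end Aux18


/-- The exponential of a linear endomorphism of matrix space. -/
def endExp {d : ℕ} (L : Mat d →ₗ[ℂ] Mat d) : Mat d →ₗ[ℂ] Mat d :=
  (@NormedSpace.exp (Mat d →L[ℂ] Mat d) _ _
    (@NonUnitalSeminormedRing.toIsTopologicalRing _ ContinuousLinearMap.toNormedRing.toNonUnitalNormedRing.toNonUnitalSeminormedRing)
    (LinearMap.toContinuousLinearMap L)).toLinearMap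

/-- The induced trace norm (1→1 norm) of a linear map on matrices. -/
def oneNorm {d : ℕ} (L : Mat d →ₗ[ℂ] Mat d) : ℝ :=
  ⨆ A : {A : Mat d // traceNorm A = 1}, traceNorm (L A.1)


/-- the KMS spectral gap of `L_KMS` equals the spectral gap of the Hermitian
part of the similarity-transformed full generator `L̃`. -/
theorem stmt_18 {d : ℕ} (hd : 2 ≤ d) (H : Mat d) (hH : H.IsHermitian) (β : ℝ) (hβ : 0 < β)
    (Bt : Mat d) (hBt : Bt.IsHermitian)
    (hBtcomm : Bt * gibbs H β = gibbs H β * Bt)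
    (LKMS LKMSadj : Mat d →ₗ[ℂ] Mat d)
    (hadj : ∀ A B : Mat d, hsInner (LKMS A) B = hsInner A (LKMSadj B))
    (hKMS : ∀ A B : Mat d, kmsInner H β A (LKMSadj B) = kmsInner H β (LKMSadj A) B)
    (Lt : Mat d →ₗ[ℂ] Mat d)
    (hLt : ∀ X : Mat d, Lt X = -(Complex.I • (Bt * X - X * Bt)) + LKMS X)
    (K Kadj : Mat d →ₗ[ℂ] Mat d)
    (hK : ∀ X : Mat d, K X = gibbsPow H β (-(1/4)) *
      Lt (gibbsPow H β (1/4) * X * gibbsPow H β (1/4)) * gibbsPow H β (-(1/4)))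
    (hKadj : ∀ A B : Mat d, hsInner (K A) B = hsInner A (Kadj B)) :
    sInf {x : ℝ | ∃ A : Mat d, A ≠ 0 ∧ Matrix.trace (A * gibbs H β) = 0 ∧
        x = (-(kmsInner H β A (LKMSadj A))).re / (kmsInner H β A A).re} =
      sInf {x : ℝ | ∃ X : Mat d, X ≠ 0 ∧ hsInner X (gibbsPow H β (1/2)) = 0 ∧
        x = (-(hsInner X (((1/2 : ℂ) • (K + Kadj)) X))).re / (hsInner X X).re} := by
  have hd0 : 0 < d := lt_of_lt_of_le (by norm_num) hd
  set P4 : Mat d := gibbsPow H β (1/4) with hP4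
  set P4' : Mat d := gibbsPow H β (-(1/4)) with hP4'
  set P2 : Mat d := gibbsPow H β (1/2) with hP2
  have hQmul : ∀ s t : ℝ, gibbsPow H β s * gibbsPow H β t = gibbsPow H β (s + t) := by
    intro s t
    rw [Aux18.gibbsPow_eq hH, Aux18.gibbsPow_eq hH, Aux18.gibbsPow_eq hH,
      Aux18.P_mul hH β hd0]
  have hQherm : ∀ s : ℝ, (gibbsPow H β s)ᴴ = gibbsPow H β s := by
    intro s
    rw [Aux18.gibbsPow_eq hH, Aux18.P_herm hH]
  have h44 : P4 * P4 = P2 := by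
    rw [hP4, hP2, hQmul]; norm_num
  have h4i : P4 * P4' = 1 := by
    rw [hP4, hP4', hQmul]
    rw [show (1/4:ℝ) + -(1/4) = 0 by ring, Aux18.gibbsPow_eq hH]
    exact Aux18.P_zero hH β
  have h4i' : P4' * P4 = 1 := by
    rw [hP4, hP4', hQmul]
    rw [show -(1/4:ℝ) + 1/4 = 0 by ring, Aux18.gibbsPow_eq hH]
    exact Aux18.P_zero hH β
  have h424 : P4 * P2 * P4 = gibbs H β := by
    rw [hP4, hP2, hQmul, hQmul, Aux18.gibbs_eq]; norm_num
  have hcomm2 : Bt * P2 = P2 * Bt := by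
    rw [hP2]
    rw [Aux18.gibbsPow_eq hH]
    exact Aux18.commute_P hH β hd0 hβ Bt hBtcomm _
  have hP4h : P4ᴴ = P4 := hQherm _
  have hP2h : P2ᴴ = P2 := hQherm _
  have hgibbsh : (gibbs H β)ᴴ = gibbs H β := by rw [Aux18.gibbs_eq]; exact hQherm _
  have m44 : ∀ Z : Mat d, P4 * (P4 * Z) = P2 * Z := fun Z => by rw [← mul_assoc, h44]
  have m4i : ∀ Z : Mat d, P4 * (P4' * Z) = Z := fun Z => by rw [← mul_assoc, h4i, one_mul]
  have m4i' : ∀ Z : Mat d, P4' * (P4 * Z) = Z := fun Z => by rw [← mul_assoc, h4i', one_mul]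
  have star_hs : ∀ A B : Mat d, star (hsInner A B) = hsInner B A := by
    intro A B
    rw [hsInner, hsInner, ← Matrix.trace_conjTranspose, Matrix.conjTranspose_mul,
      Matrix.conjTranspose_conjTranspose]
  have key1 : ∀ A : Mat d, hsInner (P4 * A * P4) (P4 * A * P4) = kmsInner H β A A := by
    intro A
    rw [hsInner, kmsInner]
    show Matrix.trace ((P4 * A * P4)ᴴ * (P4 * A * P4)) =
      Matrix.trace (Aᴴ * P2 * A * P2)
    simp only [Matrix.conjTranspose_mul, hP4h, mul_assoc]
    rw [m44]
    rw [Matrix.trace_mul_comm]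
    simp only [mul_assoc]
    rw [h44]
  have key2 : ∀ A : Mat d, hsInner (P4 * A * P4) P2 = star (Matrix.trace (A * gibbs H β)) := by
    intro A
    rw [hsInner]
    rw [show star (Matrix.trace (A * gibbs H β)) = Matrix.trace (Aᴴ * gibbs H β) from ?_]
    · simp only [Matrix.conjTranspose_mul, hP4h, mul_assoc]
      rw [Matrix.trace_mul_comm]
      simp only [mul_assoc]
      rw [show P2 * P4 = gibbsPow H β ((1/2 : ℝ) + 1/4) from by rw [hP2, hP4, hQmul],
        show P4 * gibbsPow H β ((1/2 : ℝ) + 1/4) = gibbsPow H β ((1/4 : ℝ) + (1/2 + 1/4)) from by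
          rw [hP4, hQmul],
        show ((1/4 : ℝ) + (1/2 + 1/4)) = 1 from by norm_num, ← Aux18.gibbs_eq]
    · rw [← Matrix.trace_conjTranspose, Matrix.conjTranspose_mul, hgibbsh,
        Matrix.trace_mul_comm]
  have hsmul : ∀ (B C : Mat d) (c : ℂ), hsInner B (c • C) = c * hsInner B C := by
    intro B C c
    rw [hsInner, hsInner, Matrix.mul_smul, Matrix.trace_smul, smul_eq_mul]
  have hadd : ∀ (B C C' : Mat d), hsInner B (C + C') = hsInner B C + hsInner B C' := by
    intro B C C'
    rw [hsInner, hsInner, hsInner, Matrix.mul_add, Matrix.trace_add]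
  have swapP2 : ∀ Z : Mat d, P2 * (Bt * Z) = Bt * (P2 * Z) := fun Z => by
    rw [← mul_assoc, ← hcomm2, mul_assoc]
  have key3 : ∀ A : Mat d, (hsInner (P4 * A * P4) (((1/2 : ℂ) • (K + Kadj)) (P4 * A * P4))).re
      = (kmsInner H β A (LKMSadj A)).re := by
    intro A
    have happ : ((1/2 : ℂ) • (K + Kadj)) (P4 * A * P4)
        = (1/2 : ℂ) • (K (P4 * A * P4) + Kadj (P4 * A * P4)) := by
      simp [LinearMap.smul_apply, LinearMap.add_apply]
    set z : ℂ := hsInner (P4 * A * P4) (K (P4 * A * P4)) with hzdef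
    have hKadjX : hsInner (P4 * A * P4) (Kadj (P4 * A * P4)) = star z := by
      rw [hzdef, ← hKadj, ← star_hs]
    have hhalf : (hsInner (P4 * A * P4) (((1/2 : ℂ) • (K + Kadj)) (P4 * A * P4))).re = z.re := by
      rw [happ, hsmul, hadd, hKadjX, Complex.star_def, Complex.add_conj]
      push_cast
      rw [show (1/2 : ℂ) * (2 * (z.re : ℂ)) = ((z.re : ℝ) : ℂ) by ring]
      simp
    rw [hhalf]
    -- now compute z
    have hY4 : P4 * (P4 * A * P4) * P4 = P2 * (A * P2) := by
      simp only [mul_assoc]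
      rw [h44, m44]
    have hz : z = Matrix.trace (Aᴴ * Lt (P2 * (A * P2))) := by
      rw [hzdef, hsInner, hK, hY4]
      simp only [Matrix.conjTranspose_mul, hP4h, mul_assoc]
      rw [m4i, Matrix.trace_mul_comm]
      simp only [mul_assoc]
      rw [h4i', mul_one]
    set t1 : ℂ := Matrix.trace (Aᴴ * (Bt * (P2 * (A * P2)))) with ht1def
    set t2 : ℂ := Matrix.trace (Aᴴ * (P2 * (A * (P2 * Bt)))) with ht2def
    set u : ℂ := Matrix.trace (Aᴴ * LKMS (P2 * (A * P2))) with hudef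
    have hzsplit : z = -(Complex.I * (t1 - t2)) + u := by
      rw [hz, hLt]
      rw [Matrix.mul_add, Matrix.trace_add, Matrix.mul_neg, Matrix.trace_neg,
        Matrix.mul_smul, Matrix.trace_smul, smul_eq_mul, Matrix.mul_sub, Matrix.trace_sub]
      have e2 : Aᴴ * (P2 * (A * P2) * Bt) = Aᴴ * (P2 * (A * (P2 * Bt))) := by
        simp only [mul_assoc]
      rw [e2]
    have hstar1 : star t1 = t1 := by
      have e1 : star t1 = Matrix.trace (P2 * (Aᴴ * (P2 * (Bt * A)))) := by
        rw [ht1def, ← Matrix.trace_conjTranspose]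
        congr 1
        simp only [Matrix.conjTranspose_mul, Matrix.conjTranspose_conjTranspose, hP2h,
          hBt.eq, mul_assoc]
      rw [e1, Matrix.trace_mul_comm]
      simp only [mul_assoc]
      rw [swapP2]
    have hstar2 : star t2 = t2 := by
      have e1 : star t2 = Matrix.trace (Bt * (P2 * (Aᴴ * (P2 * A)))) := by
        rw [ht2def, ← Matrix.trace_conjTranspose]
        congr 1
        simp only [Matrix.conjTranspose_mul, Matrix.conjTranspose_conjTranspose, hP2h,
          hBt.eq, mul_assoc]
      rw [e1, Matrix.trace_mul_comm]
      simp only [mul_assoc]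
      rw [Matrix.trace_mul_comm]
      simp only [mul_assoc]
      rw [hcomm2]
    have him : (t1 - t2).im = 0 := by
      have : star (t1 - t2) = t1 - t2 := by
        rw [star_sub, hstar1, hstar2]
      rw [Complex.star_def] at this
      exact (Complex.conj_eq_iff_im).mp this
    have hzre : z.re = u.re := by
      rw [hzsplit]
      rw [Complex.add_re, Complex.neg_re, Complex.mul_re, Complex.I_re, Complex.I_im, him]
      ring
    rw [hzre]
    -- finally u.re = (kmsInner A (LKMSadj A)).re
    have hu : star u = kmsInner H β A (LKMSadj A) := by
      have e1 : u = hsInner A (LKMS (P2 * (A * P2))) := by rw [hudef, hsInner]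
      rw [e1, star_hs, hadj, hsInner, kmsInner]
      simp only [Matrix.conjTranspose_mul, Matrix.conjTranspose_conjTranspose, hP2h, mul_assoc]
      rw [Matrix.trace_mul_comm]
      simp only [mul_assoc]
      rfl
    rw [← hu, Complex.star_def, Complex.conj_re]
  have keyne : ∀ A : Mat d, A ≠ 0 → P4 * A * P4 ≠ 0 := by
    intro A hA0 hX
    apply hA0
    have h5 : P4' * (P4 * A * P4) * P4' = A := by
      simp only [mul_assoc]
      rw [h4i, mul_one, m4i']
    rw [← h5, hX, mul_zero, zero_mul]
  have hsets : {x : ℝ | ∃ A : Mat d, A ≠ 0 ∧ Matrix.trace (A * gibbs H β) = 0 ∧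
        x = (-(kmsInner H β A (LKMSadj A))).re / (kmsInner H β A A).re} =
      {x : ℝ | ∃ X : Mat d, X ≠ 0 ∧ hsInner X (gibbsPow H β (1/2)) = 0 ∧
        x = (-(hsInner X (((1/2 : ℂ) • (K + Kadj)) X))).re / (hsInner X X).re} := by
    ext x
    simp only [Set.mem_setOf_eq]
    constructor
    · rintro ⟨A, hA0, htr, rfl⟩
      refine ⟨P4 * A * P4, keyne A hA0, ?_, ?_⟩
      · show hsInner (P4 * A * P4) P2 = 0
        rw [key2 A, htr, star_zero]
      · rw [key1 A, Complex.neg_re, Complex.neg_re, key3 A]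
    · rintro ⟨X, hX0, htr, rfl⟩
      have hXA : X = P4 * (P4' * X * P4') * P4 := by
        have h5 : P4 * (P4' * X * P4') * P4 = X := by
          simp only [mul_assoc]
          rw [h4i', mul_one, m4i]
        exact h5.symm
      refine ⟨P4' * X * P4', ?_, ?_, ?_⟩
      · intro h0
        apply hX0
        rw [hXA, h0, mul_zero, zero_mul]
      · have h6 := key2 (P4' * X * P4')
        rw [← hXA] at h6
        have htr' : hsInner X P2 = 0 := htr
        rw [htr'] at h6
        exact star_eq_zero.mp h6.symm
      · rw [← key1 (P4' * X * P4'), ← hXA, Complex.neg_re, Complex.neg_re,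
          ← key3 (P4' * X * P4'), ← hXA]
  rw [hsets]


end
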